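/- Let n ≥ 2, and let j and k be integers satisfying 1 ≤ j ≤ ⌊n/2⌋ and j ≤ k ≤ n − j. Then there exists a permutation π of length n with cpk π = j and cdes π = k. -/

import Mathlib

/-- A permutation: a list of distinct positive integers. -/
def IsPerm (π : List ℕ) : Prop := π.Nodup ∧ ∀ x ∈ π, 0 < x

/-- The descent set `Des π = {i ∈ {1,…,n−1} : π_i > π_{i+1}}` (1-based indexing). -/
def Des (π : List ℕ) : Finset ℕ :=
  (Finset.Icc 1 (π.length - 1)).filter fun i => π.getD i 0 < π.getD (i - 1) 0

/-- The descent number. -/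
def des (π : List ℕ) : ℕ := (Des π).card

/-- The major index. -/
def maj (π : List ℕ) : ℕ := ∑ i ∈ Des π, i

/-- The cyclic descent set `cDes π = {i ∈ {1,…,n} : π_i > π_{i+1}}`, indices mod `n`. -/
def cDes (π : List ℕ) : Finset ℕ :=
  (Finset.Icc 1 π.length).filter fun i => π.getD (i % π.length) 0 < π.getD (i - 1) 0

/-- The cyclic descent number. -/
def cdes (π : List ℕ) : ℕ := (cDes π).card

/-- The cyclic major index. -/
def cmaj (π : List ℕ) : ℕ := ∑ i ∈ cDes π, i

/-- The peak set `Pk π = {i ∈ {2,…,n−1} : π_{i−1} < π_i > π_{i+1}}` (1-based indexing). -/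
def Pk (π : List ℕ) : Finset ℕ :=
  (Finset.Icc 2 (π.length - 1)).filter fun i =>
    π.getD (i - 2) 0 < π.getD (i - 1) 0 ∧ π.getD i 0 < π.getD (i - 1) 0

/-- The peak number. -/
def pk (π : List ℕ) : ℕ := (Pk π).card

/-- The cyclic peak set `cPk π = {i ∈ {1,…,n} : π_{i−1} < π_i > π_{i+1}}`, indices mod `n`. -/
def cPk (π : List ℕ) : Finset ℕ :=
  (Finset.Icc 1 π.length).filter fun i =>
    π.getD ((i + π.length - 2) % π.length) 0 < π.getD (i - 1) 0 ∧
      π.getD (i % π.length) 0 < π.getD (i - 1) 0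

/-- The cyclic peak number. -/
def cpk (π : List ℕ) : ℕ := (cPk π).card

/-- The cyclic valley set `cVal π = {i ∈ {1,…,n} : π_{i−1} > π_i < π_{i+1}}`, indices mod `n`. -/
def cVal (π : List ℕ) : Finset ℕ :=
  (Finset.Icc 1 π.length).filter fun i =>
    π.getD (i - 1) 0 < π.getD ((i + π.length - 2) % π.length) 0 ∧
      π.getD (i - 1) 0 < π.getD (i % π.length) 0

/-- The cyclic valley number. -/
def cval (π : List ℕ) : ℕ := (cVal π).card

/-- The distribution of a linear statistic `st` over the `n` rotations of `π`,
i.e. the multiset-valued cyclic statistic induced by `st`, evaluated at `[π]`. -/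
def cycStat {A : Type*} (st : List ℕ → A) (π : List ℕ) : Multiset A :=
  (Multiset.range π.length).map fun i => st (π.rotate i)

/-- `τ` is a (linear) shuffle of `π` and `σ`. -/
def IsShuffle (π σ τ : List ℕ) : Prop :=
  π.Sublist τ ∧ σ.Sublist τ ∧ τ.length = π.length + σ.length

/-- `[τ]` is a cyclic shuffle of `[π]` and `[σ]`: some rotation of `τ` is a shuffle
of some rotation of `π` and some rotation of `σ`. -/
def IsCyclicShuffle (π σ τ : List ℕ) : Prop :=
  ∃ i j k, IsShuffle (π.rotate i) (σ.rotate j) (τ.rotate k)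

/-- The set of cyclic shuffles of `[π]` and `[σ]` (as elements of `Cycle ℕ`, so that each
cyclic shuffle is counted once) on which the statistic `cst` takes the value `v`. -/
def cycShuffleFiber {A : Type*} (cst : List ℕ → A) (π σ : List ℕ) (v : A) : Set (Cycle ℕ) :=
  {c : Cycle ℕ | ∃ τ : List ℕ, (↑τ : Cycle ℕ) = c ∧ IsCyclicShuffle π σ τ ∧ cst τ = v}

/-- A (rotation-invariant) statistic `cst` is cyclic shuffle-compatible if the distribution
of `cst` over the set of cyclic shuffles of `[π]` and `[σ]` (each cyclic shuffle counted
once) depends only on `cst π`, `cst σ`, `|π|` and `|σ|`. -/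
def CyclicShuffleCompatible {A : Type*} (cst : List ℕ → A) : Prop :=
  ∀ π σ π' σ' : List ℕ, IsPerm π → IsPerm σ → IsPerm π' → IsPerm σ' →
    π.Disjoint σ → π'.Disjoint σ' →
    π.length = π'.length → σ.length = σ'.length →
    cst π = cst π' → cst σ = cst σ' →
    ∀ v : A, (cycShuffleFiber cst π σ v).ncard = (cycShuffleFiber cst π' σ' v).ncard

namespace CpkCdesAux

def f (n j m i : ℕ) : ℕ :=
  if i = 0 then n
  else if i ≤ m + 1 then m + 2 - i
  else if i ≤ m + 2*j - 2 ∧ (i - m) % 2 = 0 then n - (i - m)/2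
  else if i ≤ m + 2*j - 2 then m + 2 + (i - m - 3)/2
  else i + 1 - j

def g (n j m v : ℕ) : ℕ :=
  if v = n then 0
  else if v ≤ m + 1 then m + 2 - v
  else if n - j + 1 ≤ v then m + 2*(n - v)
  else if v ≤ m + j - 1 then m + 3 + 2*(v - m - 2)
  else v + j - 1

variable {n j m : ℕ}

lemma gf (hj : 1 ≤ j) (hn : m + 2*j ≤ n) {i : ℕ} (hi : i < n) :
    g n j m (f n j m i) = i := by
  unfold f g; split_ifs <;> omega

lemma f_inj (hj : 1 ≤ j) (hn : m + 2*j ≤ n) {a b : ℕ} (ha : a < n) (hb : b < n)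
    (h : f n j m a = f n j m b) : a = b := by
  have := gf hj hn ha; have := gf hj hn hb; rw [h] at *; omega

lemma f_pos (hj : 1 ≤ j) (hn : m + 2*j ≤ n) {i : ℕ} (hi : i < n) :
    1 ≤ f n j m i := by
  unfold f; split_ifs <;> omega

lemma f_lt (hj : 1 ≤ j) (hn : m + 2*j ≤ n) {i : ℕ} (hi1 : 1 ≤ i) (hi : i < n) :
    f n j m i < n := by
  unfold f; split_ifs <;> omega

lemma f_zero : f n j m 0 = n := by unfold f; simp

lemma key (hj : 1 ≤ j) (hn : m + 2*j ≤ n) {i : ℕ} (hi1 : 1 ≤ i) (hi : i < n) :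
    (f n j m i < f n j m (i-1)) ↔
      (i ≤ m + 1 ∨ (m + 3 ≤ i ∧ i ≤ m + 2*j - 1 ∧ (i - m) % 2 = 1)) := by
  unfold f; split_ifs <;> omega


lemma getD_eq {i : ℕ} (hi : i < n) :
    ((List.range n).map (f n j m)).getD i 0 = f n j m i := by
  rw [List.getD_eq_getElem _ _ (by simpa using hi)]
  simp

end CpkCdesAux

open CpkCdesAux in
/-- For `n ≥ 2`, `1 ≤ j ≤ ⌊n/2⌋` and `j ≤ k ≤ n − j`, there is a permutation of
length `n` with `cpk π = j` and `cdes π = k`. -/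
theorem exists_perm_cpk_cdes (n j k : ℕ) (hn : 2 ≤ n) (hj1 : 1 ≤ j) (hj2 : j ≤ n / 2)
    (hk1 : j ≤ k) (hk2 : k ≤ n - j) :
    ∃ π : List ℕ, IsPerm π ∧ π.length = n ∧ cpk π = j ∧ cdes π = k := by
  classical
  set m := k - j with hm
  have hj : 1 ≤ j := hj1
  have hn2 : m + 2*j ≤ n := by omega
  have hk : k = m + j := by omega
  set π : List ℕ := (List.range n).map (f n j m) with hπ
  have hlen : π.length = n := by simp [hπ]
  have hget : ∀ i < n, π.getD i 0 = f n j m i := fun i hi => getD_eq hi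
  refine ⟨π, ⟨?_, ?_⟩, hlen, ?_, ?_⟩
  · -- Nodup
    refine List.Nodup.map_on ?_ (List.nodup_range (n := n))
    intro a ha b hb hfab
    exact f_inj hj hn2 (List.mem_range.mp ha) (List.mem_range.mp hb) hfab
  · -- positivity
    intro x hx
    rw [hπ, List.mem_map] at hx
    obtain ⟨i, hi, rfl⟩ := hx
    exact f_pos hj hn2 (List.mem_range.mp hi)
  · -- cpk = j
    have hPk : cPk π = insert 1 ((Finset.Icc 1 (j-1)).image (fun t => m+1+2*t)) := by
      unfold cPk
      rw [hlen]
      ext i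
      simp only [Finset.mem_filter, Finset.mem_Icc, Finset.mem_insert, Finset.mem_image]
      constructor
      · rintro ⟨⟨h1, h2⟩, hA, hB⟩
        by_cases hi1 : i = 1
        · exact Or.inl hi1
        · right
          rcases eq_or_lt_of_le h2 with rfl | hlt
          · exfalso
            rw [Nat.mod_self, hget 0 (by omega), f_zero, hget (i-1) (by omega)] at hB
            have := f_lt hj hn2 (i := i-1) (by omega) (by omega)
            omega
          · have e1 : (i + n - 2) % n = i - 2 := by
              have : i + n - 2 = (i - 2) + n := by omega
              rw [this, Nat.add_mod_right, Nat.mod_eq_of_lt (by omega)]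
            rw [e1, hget (i-2) (by omega), hget (i-1) (by omega)] at hA
            rw [Nat.mod_eq_of_lt hlt, hget i hlt, hget (i-1) (by omega)] at hB
            have hQ := (key hj hn2 (i := i) (by omega) hlt).mp hB
            have hQ1 : ¬ ((i-1) ≤ m + 1 ∨
                (m + 3 ≤ i-1 ∧ i-1 ≤ m + 2*j - 1 ∧ (i-1 - m) % 2 = 1)) := by
              intro hc
              have := (key hj hn2 (i := i-1) (by omega) (by omega)).mpr hc
              have e2 : i - 1 - 1 = i - 2 := by omega
              rw [e2] at this
              omega
            exact ⟨(i - m - 1)/2, by omega, by omega⟩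
      · rintro (rfl | ⟨t, ht, rfl⟩)
        · refine ⟨⟨le_refl 1, by omega⟩, ?_, ?_⟩
          · have e1 : (1 + n - 2) % n = n - 1 := by
              rw [Nat.mod_eq_of_lt (by omega)]
              omega
            rw [e1, hget (n-1) (by omega)]
            simp only [Nat.sub_self]
            rw [hget 0 (by omega), f_zero]
            exact f_lt hj hn2 (by omega) (by omega)
          · rw [Nat.mod_eq_of_lt (by omega), hget 1 (by omega)]
            simp only [Nat.sub_self]
            rw [hget 0 (by omega), f_zero]
            exact f_lt hj hn2 (by omega) (by omega)
        · set i := m + 1 + 2*t with hi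
          have hir : m + 3 ≤ i ∧ i ≤ m + 2*j - 1 := by omega
          have hlt : i < n := by omega
          refine ⟨⟨by omega, by omega⟩, ?_, ?_⟩
          · have e1 : (i + n - 2) % n = i - 2 := by
              have : i + n - 2 = (i - 2) + n := by omega
              rw [this, Nat.add_mod_right, Nat.mod_eq_of_lt (by omega)]
            rw [e1, hget (i-2) (by omega), hget (i-1) (by omega)]
            have hne : f n j m (i-2) ≠ f n j m (i-1) :=
              fun h => by have := f_inj hj hn2 (a := i-2) (b := i-1) (by omega) (by omega) h; omega
            have hnd : ¬ (f n j m (i-1) < f n j m (i-1-1)) := by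
              rw [key hj hn2 (i := i-1) (by omega) (by omega)]
              omega
            have e2 : i - 1 - 1 = i - 2 := by omega
            rw [e2] at hnd
            omega
          · rw [Nat.mod_eq_of_lt hlt, hget i hlt, hget (i-1) (by omega)]
            rw [key hj hn2 (i := i) (by omega) hlt]
            omega
    unfold cpk
    rw [hPk, Finset.card_insert_of_notMem, Finset.card_image_of_injective _
      (fun a b hab => by omega), Nat.card_Icc]
    · omega
    · simp only [Finset.mem_image, Finset.mem_Icc]
      rintro ⟨t, ht, hc⟩
      omega
  · -- cdes = k
    have hDes : cDes π = Finset.Icc 1 (m+1) ∪ (Finset.Icc 1 (j-1)).image (fun t => m+1+2*t) := by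
      unfold cDes
      rw [hlen]
      ext i
      simp only [Finset.mem_filter, Finset.mem_Icc, Finset.mem_union, Finset.mem_image]
      constructor
      · rintro ⟨⟨h1, h2⟩, hP⟩
        rcases eq_or_lt_of_le h2 with rfl | hlt
        · exfalso
          rw [Nat.mod_self, hget 0 (by omega), f_zero, hget (i-1) (by omega)] at hP
          have := f_lt hj hn2 (i := i-1) (by omega) (by omega)
          omega
        · rw [Nat.mod_eq_of_lt hlt, hget i hlt, hget (i-1) (by omega)] at hP
          rcases (key hj hn2 h1 hlt).mp hP with h | h
          · exact Or.inl ⟨h1, h⟩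
          · exact Or.inr ⟨(i - m - 1)/2, by omega, by omega⟩
      · intro h
        have hi1 : 1 ≤ i ∧ i ≤ m + 2*j - 1 := by
          rcases h with ⟨h1, h2⟩ | ⟨t, ht, rfl⟩ <;> omega
        have hlt : i < n := by omega
        refine ⟨⟨hi1.1, by omega⟩, ?_⟩
        rw [Nat.mod_eq_of_lt hlt, hget i hlt, hget (i-1) (by omega)]
        rw [key hj hn2 hi1.1 hlt]
        rcases h with ⟨h1, h2⟩ | ⟨t, ht, rfl⟩
        · exact Or.inl h2
        · right; omega
    unfold cdes
    rw [hDes, Finset.card_union_of_disjoint, Finset.card_image_of_injective _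
      (fun a b hab => by omega), Nat.card_Icc, Nat.card_Icc]
    · omega
    · rw [Finset.disjoint_left]
      intro a ha hb
      simp only [Finset.mem_Icc] at ha
      simp only [Finset.mem_image, Finset.mem_Icc] at hb
      obtain ⟨t, ht, hc⟩ := hb
      omega
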